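/- Let K be a totally real number field, 𝒪⁺ its totally positive integers, and d ≥ 2 a rational integer. For every δ ∈ 𝒪⁺, the number of partitions of δ into parts from 𝒪⁺ not divisible by d equals the number of partitions of δ into parts from 𝒪⁺ in which each part appears at most d − 1 times. -/

import Mathlib

open scoped Classical

open NumberField

/-- `x ∈ 𝓞 K` is totally positive if every real embedding of `K` sends it to a
positive real number. -/
def IsTotallyPositive (K : Type*) [Field K] [NumberField K] (x : 𝓞 K) : Prop :=
  ∀ φ : K →+* ℝ, 0 < φ (x : K)

namespace GlaisherAux

open Finset

/-! ### Natural number digit lemmas -/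

lemma sum_lt_pow {d : ℕ} (hd : 2 ≤ d) (a : ℕ → ℕ) (ha : ∀ j, a j < d) (J : ℕ) :
    ∑ j ∈ range J, d ^ j * a j < d ^ J := by
  induction J with
  | zero => simp
  | succ J ih =>
    rw [Finset.sum_range_succ, pow_succ]
    have h1 : a J ≤ d - 1 := by have := ha J; omega
    have h2 : d ^ J * a J ≤ d ^ J * (d - 1) := Nat.mul_le_mul_left _ h1
    have h3 : 0 < d ^ J := pow_pos (by omega) J
    have h4 : d ^ J * (d - 1) + d ^ J = d ^ J * d := by
      have h5 : d - 1 + 1 = d := by omega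
      calc d ^ J * (d - 1) + d ^ J = d ^ J * (d - 1 + 1) := by ring
        _ = d ^ J * d := by rw [h5]
    omega

lemma digit_eq {d : ℕ} (hd : 2 ≤ d) (a : ℕ → ℕ) (ha : ∀ j, a j < d) (J k : ℕ) :
    (∑ j ∈ range J, d ^ j * a j) / d ^ k % d = if k < J then a k else 0 := by
  induction J with
  | zero => simp
  | succ J ih =>
    rcases lt_trichotomy k J with h | rfl | h
    · rw [Finset.sum_range_succ]
      have hkJ : d ^ J * a J = d ^ k * (d ^ (J - k) * a J) := by
        rw [← mul_assoc, ← pow_add]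
        congr 2
        omega
      rw [hkJ, Nat.add_mul_div_left _ _ (pow_pos (by omega) k)]
      have h2 : d ^ (J - k) * a J = d * (d ^ (J - k - 1) * a J) := by
        rw [← mul_assoc]
        congr 1
        rw [← pow_succ']
        congr 1
        omega
      rw [h2, Nat.add_mul_mod_self_left, ih, if_pos h, if_pos (by omega)]
    · rw [Finset.sum_range_succ]
      have hS := sum_lt_pow hd a ha k
      rw [Nat.add_mul_div_left _ _ (pow_pos (by omega) k), Nat.div_eq_of_lt hS, zero_add,
        Nat.mod_eq_of_lt (ha k), if_pos (by omega)]
    · have hS : (∑ j ∈ range (J + 1), d ^ j * a j) < d ^ k :=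
        lt_of_lt_of_le (sum_lt_pow hd a ha (J + 1))
          (Nat.pow_le_pow_right (by omega) (by omega))
      rw [Nat.div_eq_of_lt hS, Nat.zero_mod, if_neg (by omega)]

lemma sum_digits {d : ℕ} (hd : 2 ≤ d) (c L : ℕ) (hc : c < d ^ L) :
    ∑ k ∈ range L, d ^ k * (c / d ^ k % d) = c := by
  have H : ∀ M : ℕ, ∑ k ∈ range M, d ^ k * (c / d ^ k % d) = c % d ^ M := by
    intro M
    induction M with
    | zero => simp [Nat.mod_one]
    | succ M ih =>
      rw [Finset.sum_range_succ, ih, pow_succ, Nat.mod_mul]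
  rw [H, Nat.mod_eq_of_lt hc]

/-! ### Ring of integers lemmas -/

variable (K : Type*) [Field K] [NumberField K]

lemma cast_ne_zero {d : ℕ} (hd : 2 ≤ d) : ((d : ℕ) : 𝓞 K) ≠ 0 :=
  Nat.cast_ne_zero.mpr (by omega)

set_option synthInstance.maxHeartbeats 1000000 in
lemma wfDvd : WfDvdMonoid (𝓞 K) := inferInstance

lemma not_isUnit_cast {d : ℕ} (hd : 2 ≤ d) : ¬ IsUnit ((d : ℕ) : 𝓞 K) := by
  intro h
  obtain ⟨u, hu⟩ := h.exists_right_inv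
  have h1 : ((d : ℕ) : K) * (algebraMap (𝓞 K) K u) = 1 := by
    have := congrArg (algebraMap (𝓞 K) K) hu
    rw [map_mul, map_one, map_natCast] at this
    exact this
  have hdK : ((d : ℕ) : K) ≠ 0 := Nat.cast_ne_zero.mpr (by omega)
  have h2 : algebraMap (𝓞 K) K u = algebraMap ℚ K (((d : ℕ) : ℚ)⁻¹) := by
    rw [map_inv₀, map_natCast]
    exact eq_inv_of_mul_eq_one_left (by rw [mul_comm]; exact h1)
  have hint : IsIntegral ℤ (algebraMap (𝓞 K) K u) := RingOfIntegers.isIntegral_coe u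
  rw [h2] at hint
  have hq : IsIntegral ℤ (((d : ℕ) : ℚ)⁻¹) :=
    (isIntegral_algebraMap_iff (algebraMap ℚ K).injective).mp hint
  obtain ⟨z, hz⟩ := IsIntegrallyClosed.isIntegral_iff.mp hq
  have hdQ : ((d : ℕ) : ℚ) ≠ 0 := Nat.cast_ne_zero.mpr (by omega)
  have h3 : (z : ℚ) * ((d : ℕ) : ℚ) = 1 := by
    rw [show ((z : ℤ) : ℚ) = algebraMap ℤ ℚ z from rfl, hz]
    exact inv_mul_cancel₀ hdQ
  have h4 : z * (d : ℤ) = 1 := by exact_mod_cast h3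
  have h5 : (d : ℤ) ∣ 1 := ⟨z, by linarith⟩
  have h6 := Int.le_of_dvd one_pos h5
  omega

/-- Decomposition `x = d ^ k * μ` with `¬ d ∣ μ` (when it exists). -/
noncomputable def dec (d : ℕ) (x : 𝓞 K) : ℕ × 𝓞 K :=
  if h : ∃ p : ℕ × 𝓞 K, x = ((d : ℕ) : 𝓞 K) ^ p.1 * p.2 ∧ ¬ ((d : ℕ) : 𝓞 K) ∣ p.2 then
    h.choose else (0, x)

lemma dec_spec (d : ℕ) (x : 𝓞 K) :
    x = ((d : ℕ) : 𝓞 K) ^ (dec K d x).1 * (dec K d x).2 := by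
  unfold dec
  split_ifs with h
  · exact h.choose_spec.1
  · simp

lemma dec_not_dvd {d : ℕ} (hd : 2 ≤ d) {x : 𝓞 K} (hx : x ≠ 0) :
    ¬ ((d : ℕ) : 𝓞 K) ∣ (dec K d x).2 := by
  haveI : WfDvdMonoid (𝓞 K) := wfDvd K
  have hfin := FiniteMultiplicity.of_not_isUnit (not_isUnit_cast K hd) hx
  obtain ⟨c, hc1, hc2⟩ := hfin.exists_eq_pow_mul_and_not_dvd
  have h : ∃ p : ℕ × 𝓞 K, x = ((d : ℕ) : 𝓞 K) ^ p.1 * p.2 ∧ ¬ ((d : ℕ) : 𝓞 K) ∣ p.2 :=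
    ⟨(multiplicity (((d : ℕ) : 𝓞 K)) x, c), hc1, hc2⟩
  unfold dec
  rw [dif_pos h]
  exact h.choose_spec.2

lemma pow_mul_eq_le {d : ℕ} (hd : 2 ≤ d) {k j : ℕ} {μ ν : 𝓞 K}
    (hμ : ¬ ((d : ℕ) : 𝓞 K) ∣ μ)
    (h : ((d : ℕ) : 𝓞 K) ^ k * μ = ((d : ℕ) : 𝓞 K) ^ j * ν) (hkj : k ≤ j) : k = j := by
  by_contra hne
  apply hμ
  have h1 : ((d : ℕ) : 𝓞 K) ^ k * μ
      = ((d : ℕ) : 𝓞 K) ^ k * (((d : ℕ) : 𝓞 K) ^ (j - k) * ν) := by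
    rw [h, ← mul_assoc, ← pow_add]
    congr 2
    omega
  have h2 : μ = ((d : ℕ) : 𝓞 K) ^ (j - k) * ν :=
    mul_left_cancel₀ (pow_ne_zero _ (cast_ne_zero K hd)) h1
  have h3 : ((d : ℕ) : 𝓞 K) ∣ ((d : ℕ) : 𝓞 K) ^ (j - k) := dvd_pow_self _ (by omega)
  rw [h2]
  exact h3.mul_right ν

lemma pow_mul_inj {d : ℕ} (hd : 2 ≤ d) {k j : ℕ} {μ ν : 𝓞 K}
    (hμ : ¬ ((d : ℕ) : 𝓞 K) ∣ μ) (hν : ¬ ((d : ℕ) : 𝓞 K) ∣ ν)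
    (h : ((d : ℕ) : 𝓞 K) ^ k * μ = ((d : ℕ) : 𝓞 K) ^ j * ν) : k = j ∧ μ = ν := by
  have hkj : k = j := by
    rcases le_total k j with hle | hle
    · exact pow_mul_eq_le K hd hμ h hle
    · exact (pow_mul_eq_le K hd hν h.symm hle).symm
  subst hkj
  exact ⟨rfl, mul_left_cancel₀ (pow_ne_zero _ (cast_ne_zero K hd)) h⟩

lemma dec_eq {d : ℕ} (hd : 2 ≤ d) {k : ℕ} {μ : 𝓞 K} (hμ0 : μ ≠ 0)
    (hμ : ¬ ((d : ℕ) : 𝓞 K) ∣ μ) :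
    dec K d (((d : ℕ) : 𝓞 K) ^ k * μ) = (k, μ) := by
  have hx : ((d : ℕ) : 𝓞 K) ^ k * μ ≠ 0 :=
    mul_ne_zero (pow_ne_zero _ (cast_ne_zero K hd)) hμ0
  have h1 := dec_spec K d (((d : ℕ) : 𝓞 K) ^ k * μ)
  have h2 := dec_not_dvd K hd hx
  obtain ⟨hk, hμ'⟩ := pow_mul_inj K hd h2 hμ h1.symm
  exact Prod.ext hk hμ'

/-! ### Totally positive lemmas -/

lemma tp_ne_zero (hTR : ∀ φ : K →+* ℂ, ∀ x : K, (φ x).im = 0)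
    {x : 𝓞 K} (hx : IsTotallyPositive K x) : x ≠ 0 := by
  obtain ⟨ψ⟩ := (inferInstance : Nonempty (K →+* ℂ))
  have hψ : NumberField.ComplexEmbedding.IsReal ψ := by
    rw [NumberField.ComplexEmbedding.isReal_iff]
    ext y
    rw [NumberField.ComplexEmbedding.conjugate_coe_eq]
    exact Complex.conj_eq_iff_im.mpr (hTR ψ y)
  intro h0
  have := hx hψ.embedding
  rw [h0] at this
  simp at this

lemma tp_pow_mul {d : ℕ} (hd : 2 ≤ d) {μ : 𝓞 K} (hμ : IsTotallyPositive K μ) (k : ℕ) :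
    IsTotallyPositive K (((d : ℕ) : 𝓞 K) ^ k * μ) := by
  intro φ
  have h1 := hμ φ
  have hco : (((((d : ℕ) : 𝓞 K)) ^ k * μ : 𝓞 K) : K) = ((d : ℕ) : K) ^ k * (μ : K) := by
    push_cast
    ring
  rw [hco, map_mul, map_pow, map_natCast]
  have hdpos : (0 : ℝ) < (d : ℕ) := by
    exact_mod_cast (by omega : 0 < d)
  exact mul_pos (pow_pos hdpos k) h1

lemma tp_dec_snd (d : ℕ) {x : 𝓞 K} (hx : IsTotallyPositive K x) :
    IsTotallyPositive K (dec K d x).2 := by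
  intro φ
  have h := hx φ
  have hs : ((x : 𝓞 K) : K)
      = ((d : ℕ) : K) ^ (dec K d x).1 * ((dec K d x).2 : K) := by
    conv_lhs => rw [dec_spec K d x]
    push_cast
    ring
  rw [hs, map_mul, map_pow, map_natCast] at h
  by_contra hc
  push_neg at hc
  nlinarith [pow_nonneg (by positivity : (0:ℝ) ≤ ((d : ℕ) : ℝ)) (dec K d x).1]

/-! ### The expansion map -/

noncomputable def expand (d : ℕ) (m : Multiset (𝓞 K)) : Multiset (𝓞 K) :=
  m.bind fun x => Multiset.replicate (d ^ (dec K d x).1) ((dec K d x).2)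

lemma expand_sum (d : ℕ) (m : Multiset (𝓞 K)) : (expand K d m).sum = m.sum := by
  unfold expand
  rw [Multiset.sum_bind]
  have h : Multiset.map (fun x => (Multiset.replicate (d ^ (dec K d x).1) ((dec K d x).2)).sum) m
      = Multiset.map id m := by
    apply Multiset.map_congr rfl
    intro x _
    rw [Multiset.sum_replicate, nsmul_eq_mul, Nat.cast_pow, id_eq]
    exact (dec_spec K d x).symm
  rw [h, Multiset.map_id]

lemma mem_expand {d : ℕ} {m : Multiset (𝓞 K)} {y : 𝓞 K} (hy : y ∈ expand K d m) :
    ∃ x ∈ m, y = (dec K d x).2 := by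
  unfold expand at hy
  rw [Multiset.mem_bind] at hy
  obtain ⟨x, hx, hy2⟩ := hy
  exact ⟨x, hx, Multiset.eq_of_mem_replicate hy2⟩

lemma count_expand {d : ℕ} (hd : 2 ≤ d) (m : Multiset (𝓞 K)) (hm : ∀ x ∈ m, x ≠ 0)
    {μ : 𝓞 K} (hμ0 : μ ≠ 0) (hμ : ¬ ((d : ℕ) : 𝓞 K) ∣ μ) {J : ℕ}
    (hJ : ∀ x ∈ m, (dec K d x).1 < J) :
    (expand K d m).count μ
      = ∑ j ∈ Finset.range J, d ^ j * m.count (((d : ℕ) : 𝓞 K) ^ j * μ) := by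
  induction m using Multiset.induction with
  | empty => simp [expand]
  | cons x m ih =>
    have hx0 : x ≠ 0 := hm x (Multiset.mem_cons_self x m)
    have hrec := ih (fun y hy => hm y (Multiset.mem_cons_of_mem hy))
      (fun y hy => hJ y (Multiset.mem_cons_of_mem hy))
    unfold expand at hrec ⊢
    rw [Multiset.cons_bind, Multiset.count_add, Multiset.count_replicate, hrec]
    simp_rw [Multiset.count_cons, Nat.mul_add, Finset.sum_add_distrib]
    have h : (if (dec K d x).2 = μ then d ^ (dec K d x).1 else 0)
        = ∑ j ∈ range J, d ^ j * (if ((d : ℕ) : 𝓞 K) ^ j * μ = x then 1 else 0) := by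
      by_cases hcx : (dec K d x).2 = μ
      · rw [if_pos hcx, Finset.sum_eq_single (dec K d x).1]
        · have hxe : ((d : ℕ) : 𝓞 K) ^ (dec K d x).1 * μ = x := by
            rw [← hcx]
            exact (dec_spec K d x).symm
          rw [if_pos hxe, mul_one]
        · intro j _ hne
          rw [if_neg, mul_zero]
          intro he
          have hde := dec_eq K hd hμ0 hμ (k := j)
          rw [he] at hde
          exact hne (by rw [hde])
        · intro hnotin
          exact absurd (Finset.mem_range.mpr (hJ x (Multiset.mem_cons_self x m))) hnotin
      · rw [if_neg hcx]
        symm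
        apply Finset.sum_eq_zero
        intro j _
        rw [if_neg, mul_zero]
        intro he
        have hde := dec_eq K hd hμ0 hμ (k := j)
        rw [he] at hde
        exact hcx (by rw [hde])
    omega

/-! ### The contraction map -/

noncomputable def contract (d : ℕ) (n : Multiset (𝓞 K)) : Multiset (𝓞 K) :=
  ∑ μ ∈ n.toFinset, ∑ k ∈ Finset.range (n.count μ),
    Multiset.replicate (n.count μ / d ^ k % d) (((d : ℕ) : 𝓞 K) ^ k * μ)

lemma mem_contract {d : ℕ} {n : Multiset (𝓞 K)} {y : 𝓞 K} (hy : y ∈ contract K d n) :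
    ∃ k : ℕ, ∃ μ ∈ n, y = ((d : ℕ) : 𝓞 K) ^ k * μ := by
  unfold contract at hy
  rw [Multiset.mem_sum] at hy
  obtain ⟨μ, hμ, hy1⟩ := hy
  rw [Multiset.mem_sum] at hy1
  obtain ⟨k, _, hy2⟩ := hy1
  exact ⟨k, μ, Multiset.mem_toFinset.mp hμ, (Multiset.mem_replicate.mp hy2).2⟩

lemma count_contract {d : ℕ} (hd : 2 ≤ d) (n : Multiset (𝓞 K))
    (hn : ∀ x ∈ n, x ≠ 0 ∧ ¬ ((d : ℕ) : 𝓞 K) ∣ x)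
    {k : ℕ} {μ : 𝓞 K} (hμ0 : μ ≠ 0) (hμ : ¬ ((d : ℕ) : 𝓞 K) ∣ μ) :
    (contract K d n).count (((d : ℕ) : 𝓞 K) ^ k * μ) = n.count μ / d ^ k % d := by
  unfold contract
  rw [Multiset.count_sum']
  simp_rw [Multiset.count_sum', Multiset.count_replicate]
  by_cases hmem : μ ∈ n.toFinset
  · rw [Finset.sum_eq_single μ]
    · by_cases hk : k < n.count μ
      · rw [Finset.sum_eq_single k]
        · rw [if_pos rfl]
        · intro b _ hne
          rw [if_neg]
          intro he
          exact hne (pow_mul_inj K hd hμ hμ he).1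
        · intro h
          exact absurd (Finset.mem_range.mpr hk) h
      · have h1 : n.count μ < d ^ k :=
          lt_of_lt_of_le (Nat.lt_pow_self (by omega))
            (Nat.pow_le_pow_right (by omega) (by omega))
        rw [Finset.sum_eq_zero, Nat.div_eq_of_lt h1, Nat.zero_mod]
        intro b hb
        rw [if_neg]
        intro he
        have := (pow_mul_inj K hd hμ hμ he).1
        rw [Finset.mem_range] at hb
        omega
    · intro ν hν hne
      apply Finset.sum_eq_zero
      intro k' _
      rw [if_neg]
      intro he
      obtain ⟨hν0, hνd⟩ := hn ν (Multiset.mem_toFinset.mp hν)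
      exact hne (pow_mul_inj K hd hνd hμ he).2
    · intro h
      exact absurd hmem h
  · have hc : n.count μ = 0 :=
      Multiset.count_eq_zero_of_notMem (fun h => hmem (Multiset.mem_toFinset.mpr h))
    rw [hc, Nat.zero_div, Nat.zero_mod]
    apply Finset.sum_eq_zero
    intro ν hν
    apply Finset.sum_eq_zero
    intro k' _
    rw [if_neg]
    intro he
    obtain ⟨hν0, hνd⟩ := hn ν (Multiset.mem_toFinset.mp hν)
    have := (pow_mul_inj K hd hνd hμ he).2
    rw [this] at hν
    exact hmem hν

lemma contract_sum {d : ℕ} (hd : 2 ≤ d) (n : Multiset (𝓞 K)) :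
    (contract K d n).sum = n.sum := by
  unfold contract
  rw [Multiset.sum_sum]
  have h : ∀ μ ∈ n.toFinset,
      (∑ k ∈ Finset.range (n.count μ),
        Multiset.replicate (n.count μ / d ^ k % d) (((d : ℕ) : 𝓞 K) ^ k * μ)).sum
      = n.count μ • μ := by
    intro μ _
    rw [Multiset.sum_sum]
    have h2 : ∀ k ∈ Finset.range (n.count μ),
        (Multiset.replicate (n.count μ / d ^ k % d) (((d : ℕ) : 𝓞 K) ^ k * μ)).sum
        = ((d ^ k * (n.count μ / d ^ k % d) : ℕ) : 𝓞 K) * μ := by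
      intro k _
      rw [Multiset.sum_replicate, nsmul_eq_mul]
      push_cast
      ring
    rw [Finset.sum_congr rfl h2, ← Finset.sum_mul, ← Nat.cast_sum,
      sum_digits hd _ _ (Nat.lt_pow_self (by omega)), nsmul_eq_mul]
  rw [Finset.sum_congr rfl h]
  conv_rhs => rw [← Multiset.map_id n, Finset.sum_multiset_map_count]
  simp

end GlaisherAux

/-- Glaisher over totally real fields: for `d ≥ 2` and totally positive `δ`,
the number of partitions of `δ` into totally positive parts not divisible by `d` equals
the number of partitions of `δ` into totally positive parts each repeated at most `d − 1`
times. -/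
theorem glaisher_totally_real
    (K : Type*) [Field K] [NumberField K]
    (hTR : ∀ φ : K →+* ℂ, ∀ x : K, (φ x).im = 0)
    (d : ℕ) (hd : 2 ≤ d) (δ : 𝓞 K) (hδ : IsTotallyPositive K δ) :
    {m : Multiset (𝓞 K) |
        (∀ x ∈ m, IsTotallyPositive K x ∧ ¬ (d : 𝓞 K) ∣ x) ∧ m.sum = δ}.ncard =
    {m : Multiset (𝓞 K) |
        (∀ x ∈ m, IsTotallyPositive K x) ∧ (∀ x : 𝓞 K, m.count x ≤ d - 1) ∧
          m.sum = δ}.ncard := by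
  classical
  open GlaisherAux in
  set A := {m : Multiset (𝓞 K) |
      (∀ x ∈ m, IsTotallyPositive K x ∧ ¬ (d : 𝓞 K) ∣ x) ∧ m.sum = δ} with hA
  set B := {m : Multiset (𝓞 K) |
      (∀ x ∈ m, IsTotallyPositive K x) ∧ (∀ x : 𝓞 K, m.count x ≤ d - 1) ∧
        m.sum = δ} with hB
  have hinj : Set.InjOn (expand K d) B := by
    intro m hm m' hm' heq
    obtain ⟨htp, hcnt, hsum⟩ := hm
    obtain ⟨htp', hcnt', hsum'⟩ := hm'
    ext x
    by_cases hx : x ∈ m ∨ x ∈ m'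
    · have hxtp : IsTotallyPositive K x := by
        rcases hx with hx | hx
        · exact htp x hx
        · exact htp' x hx
      have hx0 : x ≠ 0 := tp_ne_zero K hTR hxtp
      have hμ0 : (dec K d x).2 ≠ 0 := by
        intro h
        apply hx0
        rw [dec_spec K d x, h, mul_zero]
      have hμd := dec_not_dvd K hd hx0
      have key : ∀ mm : Multiset (𝓞 K), (∀ y ∈ mm, IsTotallyPositive K y) →
          (∀ y : 𝓞 K, mm.count y ≤ d - 1) →
          mm.count x = (expand K d mm).count (dec K d x).2 / d ^ (dec K d x).1 % d := by
        intro mm h1 h2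
        set J := (dec K d x).1 + 1 + mm.toFinset.sup (fun y => (dec K d y).1) with hJdef
        have hJ : ∀ y ∈ mm, (dec K d y).1 < J := by
          intro y hy
          have h5 := Finset.le_sup (f := fun y => (dec K d y).1) (Multiset.mem_toFinset.mpr hy)
          omega
        rw [count_expand K hd mm (fun y hy => tp_ne_zero K hTR (h1 y hy)) hμ0 hμd hJ]
        rw [digit_eq hd _ (fun j => by have := h2 (((d : ℕ) : 𝓞 K) ^ j * (dec K d x).2); omega)
          J (dec K d x).1]
        rw [if_pos (by omega)]
        conv_lhs => rw [dec_spec K d x]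
      rw [key m htp hcnt, key m' htp' hcnt', heq]
    · push_neg at hx
      rw [Multiset.count_eq_zero_of_notMem hx.1, Multiset.count_eq_zero_of_notMem hx.2]
  have himage : expand K d '' B = A := by
    ext n
    constructor
    · rintro ⟨m, hm, rfl⟩
      obtain ⟨htp, hcnt, hsum⟩ := hm
      refine ⟨?_, ?_⟩
      · intro y hy
        obtain ⟨x, hx, rfl⟩ := mem_expand K hy
        have hx0 : x ≠ 0 := tp_ne_zero K hTR (htp x hx)
        exact ⟨tp_dec_snd K d (htp x hx), dec_not_dvd K hd hx0⟩
      · rw [expand_sum K d m]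
        exact hsum
    · intro hn
      obtain ⟨hparts, hsum⟩ := hn
      have hn' : ∀ x ∈ n, x ≠ 0 ∧ ¬ ((d : ℕ) : 𝓞 K) ∣ x :=
        fun x hx => ⟨tp_ne_zero K hTR (hparts x hx).1, (hparts x hx).2⟩
      have hcontr0 : ∀ y ∈ contract K d n, y ≠ 0 := by
        intro y hy
        obtain ⟨k, μ, hμ, rfl⟩ := mem_contract K hy
        exact mul_ne_zero (pow_ne_zero _ (cast_ne_zero K hd)) (hn' μ hμ).1
      refine ⟨contract K d n, ⟨?_, ?_, ?_⟩, ?_⟩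
      · intro y hy
        obtain ⟨k, μ, hμ, rfl⟩ := mem_contract K hy
        exact tp_pow_mul K hd (hparts μ hμ).1 k
      · intro x
        by_cases hx : x ∈ contract K d n
        · obtain ⟨k, μ, hμ, rfl⟩ := mem_contract K hx
          obtain ⟨hμ0, hμd⟩ := hn' μ hμ
          rw [count_contract K hd n hn' hμ0 hμd]
          have := Nat.mod_lt (n.count μ / d ^ k) (show 0 < d by omega)
          omega
        · rw [Multiset.count_eq_zero_of_notMem hx]
          omega
      · rw [contract_sum K hd n]
        exact hsum
      · ext x
        by_cases hdx : ((d : ℕ) : 𝓞 K) ∣ x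
        · have h1 : x ∉ expand K d (contract K d n) := by
            intro hmem
            obtain ⟨y, hy, rfl⟩ := mem_expand K hmem
            exact dec_not_dvd K hd (hcontr0 y hy) hdx
          have h2 : x ∉ n := fun hmem => (hn' x hmem).2 hdx
          rw [Multiset.count_eq_zero_of_notMem h1, Multiset.count_eq_zero_of_notMem h2]
        · have hx0 : x ≠ 0 := by
            intro h
            apply hdx
            rw [h]
            exact dvd_zero _
          set c := n.count x with hc
          set J := c + 1 + (contract K d n).toFinset.sup (fun y => (dec K d y).1) with hJdef
          have hJ : ∀ y ∈ contract K d n, (dec K d y).1 < J := by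
            intro y hy
            have h5 := Finset.le_sup (f := fun y => (dec K d y).1) (Multiset.mem_toFinset.mpr hy)
            omega
          rw [count_expand K hd (contract K d n) hcontr0 hx0 hdx hJ]
          have hstep : ∀ j ∈ Finset.range J,
              d ^ j * (contract K d n).count (((d : ℕ) : 𝓞 K) ^ j * x)
              = d ^ j * (c / d ^ j % d) := by
            intro j _
            rw [count_contract K hd n hn' hx0 hdx]
          rw [Finset.sum_congr rfl hstep]
          have hcJ : c < d ^ J :=
            lt_of_lt_of_le (Nat.lt_pow_self (n := c) (by omega))
              (Nat.pow_le_pow_right (by omega) (by omega))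
          exact sum_digits hd c J hcJ
  rw [← himage, Set.ncard_image_of_injOn hinj]
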